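/- arXiv:1607.01993 — 2 statements merged into one kernel-verified Lean document; each statement's English description precedes it below -/
import Mathlib

section
/- Let A be a quantifier-free symbolic heap and B = ∃z⃗. Q with z⃗ disjoint from the variables of A and no variable of z⃗ occurring on the right-hand side of a points-to formula in Q. Then A ⊨ B (every stack-heap pair satisfying A satisfies B) if and only if the arithmetic sentence ∀x⃗. ¬χ(A,B) is true over ℕ, where x⃗ lists all free variables of A and B. -/
/-! ## Array separation logic (ASL): syntax and stack-heap semantics -/

/-- Terms of array separation logic: variables (named by naturals), constants,
addition, and multiplication by a constant. -/
inductive Trm : Type where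
  | var : ℕ → Trm
  | const : ℕ → Trm
  | add : Trm → Trm → Trm
  | smul : ℕ → Trm → Trm

/-- A stack maps variables to naturals. -/
abbrev Stack := ℕ → ℕ

/-- Evaluation of terms under a stack. -/
def Trm.eval (s : Stack) : Trm → ℕ
  | .var x => s x
  | .const n => n
  | .add t u => t.eval s + u.eval s
  | .smul n t => n * t.eval s

/-- Variables occurring in a term. -/
def Trm.vars : Trm → Set ℕ
  | .var x => {x}
  | .const _ => ∅
  | .add t u => t.vars ∪ u.vars
  | .smul _ t => t.vars

/-- Pure formulas: conjunctions of atomic arithmetic constraints. -/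
inductive PureF : Type where
  | tru : PureF
  | eq : Trm → Trm → PureF
  | ne : Trm → Trm → PureF
  | le : Trm → Trm → PureF
  | lt : Trm → Trm → PureF
  | and : PureF → PureF → PureF

/-- Satisfaction of pure formulas (depends only on the stack). -/
def PureF.sat (s : Stack) : PureF → Prop
  | .tru => True
  | .eq t u => t.eval s = u.eval s
  | .ne t u => t.eval s ≠ u.eval s
  | .le t u => t.eval s ≤ u.eval s
  | .lt t u => t.eval s < u.eval s
  | .and p q => p.sat s ∧ q.sat s

def PureF.vars : PureF → Set ℕ
  | .tru => ∅
  | .eq t u => t.vars ∪ u.vars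
  | .ne t u => t.vars ∪ u.vars
  | .le t u => t.vars ∪ u.vars
  | .lt t u => t.vars ∪ u.vars
  | .and p q => p.vars ∪ q.vars

/-- The (top-level) terms occurring in a pure formula. -/
def PureF.trms : PureF → List Trm
  | .tru => []
  | .eq t u => [t, u]
  | .ne t u => [t, u]
  | .le t u => [t, u]
  | .lt t u => [t, u]
  | .and p q => p.trms ++ q.trms

/-- The conjuncts of a pure formula. -/
def PureF.conjuncts : PureF → List PureF
  | .and p q => p.conjuncts ++ q.conjuncts
  | p => [p]

/-- Finite conjunction. -/
def bigAnd : List PureF → PureF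
  | [] => .tru
  | p :: ps => .and p (bigAnd ps)

/-- Spatial formulas: `emp`, points-to, arrays, and separating conjunction. -/
inductive Spatial : Type where
  | emp : Spatial
  | pto : Trm → Trm → Spatial
  | arr : Trm → Trm → Spatial
  | star : Spatial → Spatial → Spatial

/-- Heaps: finite partial functions from ℕ (locations) to ℕ (values). -/
abbrev Heap := Finmap (fun _ : ℕ => ℕ)

/-- Satisfaction of spatial formulas. -/
def Spatial.sat (s : Stack) : Spatial → Heap → Prop
  | .emp, h => h = ∅
  | .pto t u, h =>
      h.keys = {Trm.eval s t} ∧ Finmap.lookup (Trm.eval s t) h = some (Trm.eval s u)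
  | .arr t u, h =>
      Trm.eval s t ≤ Trm.eval s u ∧ h.keys = Finset.Icc (Trm.eval s t) (Trm.eval s u)
  | .star F G, h =>
      ∃ h₁ h₂ : Heap, h₁.Disjoint h₂ ∧ h = h₁ ∪ h₂ ∧ F.sat s h₁ ∧ G.sat s h₂

def Spatial.vars : Spatial → Set ℕ
  | .emp => ∅
  | .pto t u => t.vars ∪ u.vars
  | .arr t u => t.vars ∪ u.vars
  | .star F G => F.vars ∪ G.vars

/-- The (top-level) terms occurring in a spatial formula. -/
def Spatial.trms : Spatial → List Trm
  | .emp => []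
  | .pto t u => [t, u]
  | .arr t u => [t, u]
  | .star F G => F.trms ++ G.trms

/-- The points-to atoms of a spatial formula, as (address, value) pairs. -/
def Spatial.ptos : Spatial → List (Trm × Trm)
  | .emp => []
  | .pto t u => [(t, u)]
  | .arr _ _ => []
  | .star F G => F.ptos ++ G.ptos

/-- The array atoms of a spatial formula, as endpoint pairs. -/
def Spatial.arrs : Spatial → List (Trm × Trm)
  | .emp => []
  | .pto _ _ => []
  | .arr t u => [(t, u)]
  | .star F G => F.arrs ++ G.arrs

/-- The arrays of the array abstraction `⟨A⟩`: each points-to `c ↦ d` is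
replaced by the single-cell array `array(c,c)`. -/
def Spatial.absArrays : Spatial → List (Trm × Trm)
  | .emp => []
  | .pto t _ => [(t, t)]
  | .arr t u => [(t, u)]
  | .star F G => F.absArrays ++ G.absArrays

/-- Finite separating conjunction. -/
def bigStar : List Spatial → Spatial
  | [] => .emp
  | F :: Fs => .star F (bigStar Fs)

/-- Quantifier-free symbolic heaps `Π : F`. -/
structure SymHeap : Type where
  pure : PureF
  spatial : Spatial

/-- Satisfaction of quantifier-free symbolic heaps. -/
def SymHeap.sat (s : Stack) (h : Heap) (A : SymHeap) : Prop :=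
  A.pure.sat s ∧ A.spatial.sat s h

def SymHeap.vars (A : SymHeap) : Set ℕ := A.pure.vars ∪ A.spatial.vars

/-- All (top-level) terms occurring in a symbolic heap. -/
def SymHeap.trms (A : SymHeap) : List Trm := A.pure.trms ++ A.spatial.trms

/-- Lifting `*` to symbolic heaps: conjoin pure parts, `*`-conjoin spatial parts. -/
def SymHeap.star (A X : SymHeap) : SymHeap :=
  ⟨.and A.pure X.pure, .star A.spatial X.spatial⟩

/-- Satisfiability of a symbolic heap. -/
def SymHeap.Satisfiable (A : SymHeap) : Prop := ∃ (s : Stack) (h : Heap), A.sat s h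

/-- Semantic entailment between quantifier-free symbolic heaps. -/
def Entails (A B : SymHeap) : Prop := ∀ (s : Stack) (h : Heap), A.sat s h → B.sat s h

/-- Existentially quantified symbolic heaps `∃ z⃗. Π : F`. -/
structure QSymHeap : Type where
  bound : List ℕ
  body : SymHeap

/-- Satisfaction of quantified symbolic heaps: some extension of the stack on the
bound variables satisfies the body. -/
def QSymHeap.sat (s : Stack) (h : Heap) (B : QSymHeap) : Prop :=
  ∃ s' : Stack, (∀ x : ℕ, x ∉ B.bound → s' x = s x) ∧ B.body.sat s' h

/-! ## The arithmetic encodings γ, β, φ, ψ₁, ψ₂, χ (interpreted over stacks) -/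

/-- `s ⊨ γ(A)`: the Presburger satisfiability encoding of `A`, i.e. the pure part
of `A` together with well-definedness and pairwise disjointness of the arrays of
the array abstraction `⟨A⟩`. -/
def gammaSat (A : SymHeap) (s : Stack) : Prop :=
  A.pure.sat s ∧
  (∀ p ∈ A.spatial.absArrays, Trm.eval s p.1 ≤ Trm.eval s p.2) ∧
  A.spatial.absArrays.Pairwise (fun p q =>
    Trm.eval s p.2 < Trm.eval s q.1 ∨ Trm.eval s q.2 < Trm.eval s p.1)

/-- `s ⊨ β(A,B)`. -/
def betaSat (A B : SymHeap) (s : Stack) : Prop :=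
  gammaSat A s ∧ gammaSat B s ∧
  (∀ p ∈ B.spatial.ptos, ∀ q ∈ A.spatial.arrs,
      Trm.eval s p.1 < Trm.eval s q.1 ∨ Trm.eval s p.1 > Trm.eval s q.2) ∧
  (∀ p ∈ A.spatial.ptos, ∀ q ∈ B.spatial.ptos,
      Trm.eval s p.1 ≠ Trm.eval s q.1 ∨ Trm.eval s p.2 = Trm.eval s q.2)

/-- The term set `Terms(A,B)`: all terms occurring in `A` and `B`, together with
the successor terms `b_i + 1`, `d_i + 1` (array right endpoints) and
`t_i + 1`, `v_i + 1` (points-to addresses). -/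
def termSet (A B : SymHeap) : List Trm :=
  A.trms ++ B.trms ++
  (A.spatial.arrs.map fun p => Trm.add p.2 (Trm.const 1)) ++
  (B.spatial.arrs.map fun p => Trm.add p.2 (Trm.const 1)) ++
  (A.spatial.ptos.map fun p => Trm.add p.1 (Trm.const 1)) ++
  (B.spatial.ptos.map fun p => Trm.add p.1 (Trm.const 1))

/-- A solution seed for the biabduction instance `(A,B)`. -/
def IsSolutionSeed (A B : SymHeap) (Δ : PureF) : Prop :=
  (∃ s : Stack, Δ.sat s) ∧
  (∀ s : Stack, Δ.sat s → betaSat A B s) ∧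
  (∀ δ ∈ Δ.conjuncts, ∃ t ∈ termSet A B, ∃ u ∈ termSet A B,
      δ = PureF.lt t u ∨ δ = PureF.eq t u) ∧
  (∀ t ∈ termSet A B, ∀ u ∈ termSet A B, ∃ δ ∈ Δ.conjuncts,
      δ = PureF.lt t u ∨ δ = PureF.lt u t ∨ δ = PureF.eq t u)

/-- The (quantifier-free) biabduction problem `(A,B)` has a solution. -/
def HasBiabductionSolution (A B : SymHeap) : Prop :=
  ∃ X Y : SymHeap, (A.star X).Satisfiable ∧ Entails (A.star X) (B.star Y)

/-- `s ⊨ φ(A,B)` (over the array abstractions of `A` and `B`). -/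
def phiSat (A B : SymHeap) (s : Stack) : Prop :=
  ∃ x : ℕ,
    (∃ p ∈ A.spatial.absArrays, Trm.eval s p.1 ≤ x ∧ x ≤ Trm.eval s p.2) ∧
    ∀ q ∈ B.spatial.absArrays, x < Trm.eval s q.1 ∨ x > Trm.eval s q.2

/-- `s ⊨ ψ₁(A,B)`: some points-to address of `B` is covered by an array of `A`. -/
def psi1Sat (A B : SymHeap) (s : Stack) : Prop :=
  ∃ p ∈ A.spatial.arrs, ∃ q ∈ B.spatial.ptos,
    Trm.eval s p.1 ≤ Trm.eval s q.1 ∧ Trm.eval s q.1 ≤ Trm.eval s p.2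

/-- `s ⊨ ψ₂(A,B)`: some pointers of `A` and `B` share an address but disagree on
their contents. -/
def psi2Sat (A B : SymHeap) (s : Stack) : Prop :=
  ∃ p ∈ A.spatial.ptos, ∃ q ∈ B.spatial.ptos,
    Trm.eval s p.1 = Trm.eval s q.1 ∧ Trm.eval s p.2 ≠ Trm.eval s q.2

/-- `s ⊨ χ(A, ∃z⃗.Q)`. -/
def chiSat (A : SymHeap) (zs : List ℕ) (Q : SymHeap) (s : Stack) : Prop :=
  gammaSat A s ∧
  ∀ s' : Stack, (∀ x : ℕ, x ∉ zs → s' x = s x) →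
    (¬ gammaSat Q s' ∨ phiSat A Q s' ∨ phiSat Q A s' ∨
      psi1Sat A Q s' ∨ psi2Sat A Q s')

/-! ### Auxiliary lemmas for the proof -/

theorem Trm.eval_congr {s s' : Stack} :
    ∀ t : Trm, (∀ x ∈ t.vars, s' x = s x) → t.eval s' = t.eval s
  | .var x, h => h x rfl
  | .const _, _ => rfl
  | .add t u, h => by
      simp only [Trm.eval]
      rw [Trm.eval_congr t fun x hx => h x (Set.mem_union_left _ hx),
          Trm.eval_congr u fun x hx => h x (Set.mem_union_right _ hx)]
  | .smul n t, h => by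
      simp only [Trm.eval]
      rw [Trm.eval_congr t h]

theorem PureF.sat_congr {s s' : Stack} :
    ∀ p : PureF, (∀ x ∈ p.vars, s' x = s x) → (p.sat s' ↔ p.sat s)
  | .tru, _ => Iff.rfl
  | .eq t u, h => by
      simp only [PureF.sat]
      rw [Trm.eval_congr t fun x hx => h x (Set.mem_union_left _ hx),
          Trm.eval_congr u fun x hx => h x (Set.mem_union_right _ hx)]
  | .ne t u, h => by
      simp only [PureF.sat]
      rw [Trm.eval_congr t fun x hx => h x (Set.mem_union_left _ hx),
          Trm.eval_congr u fun x hx => h x (Set.mem_union_right _ hx)]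
  | .le t u, h => by
      simp only [PureF.sat]
      rw [Trm.eval_congr t fun x hx => h x (Set.mem_union_left _ hx),
          Trm.eval_congr u fun x hx => h x (Set.mem_union_right _ hx)]
  | .lt t u, h => by
      simp only [PureF.sat]
      rw [Trm.eval_congr t fun x hx => h x (Set.mem_union_left _ hx),
          Trm.eval_congr u fun x hx => h x (Set.mem_union_right _ hx)]
  | .and p q, h => by
      simp only [PureF.sat]
      rw [PureF.sat_congr p fun x hx => h x (Set.mem_union_left _ hx),
          PureF.sat_congr q fun x hx => h x (Set.mem_union_right _ hx)]

/-- The footprint of a list of arrays. -/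
def fp (s : Stack) : List (Trm × Trm) → Finset ℕ
  | [] => ∅
  | p :: l => Finset.Icc (p.1.eval s) (p.2.eval s) ∪ fp s l

theorem mem_fp {s : Stack} {l : List (Trm × Trm)} {k : ℕ} :
    k ∈ fp s l ↔ ∃ p ∈ l, p.1.eval s ≤ k ∧ k ≤ p.2.eval s := by
  induction l with
  | nil => simp [fp]
  | cons p l ih => simp [fp, ih, Finset.mem_Icc]

theorem fp_append {s : Stack} (l₁ l₂ : List (Trm × Trm)) :
    fp s (l₁ ++ l₂) = fp s l₁ ∪ fp s l₂ := by
  induction l₁ with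
  | nil => simp [fp]
  | cons p l ih => simp [fp, ih, Finset.union_assoc]

theorem fp_congr {s s' : Stack} {l : List (Trm × Trm)}
    (h : ∀ p ∈ l, p.1.eval s' = p.1.eval s ∧ p.2.eval s' = p.2.eval s) :
    fp s' l = fp s l := by
  induction l with
  | nil => rfl
  | cons p l ih =>
      simp only [fp]
      rw [(h p (List.mem_cons_self)).1, (h p (List.mem_cons_self)).2,
        ih fun q hq => h q (List.mem_cons_of_mem _ hq)]

/-- Build a heap with key set `K` and values given by `f`. -/
def mkHeap (K : Finset ℕ) (f : ℕ → ℕ) : Heap :=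
  ⟨K.val.map fun k => ⟨k, f k⟩, by
    rw [← Multiset.nodup_keys]
    show ((K.val.map fun k => (⟨k, f k⟩ : Sigma fun _ : ℕ => ℕ)).map Sigma.fst).Nodup
    rw [Multiset.map_map]
    simpa using K.nodup⟩

theorem keys_mkHeap (K : Finset ℕ) (f : ℕ → ℕ) : (mkHeap K f).keys = K := by
  apply Finset.val_injective
  show ((K.val.map fun k => (⟨k, f k⟩ : Sigma fun _ : ℕ => ℕ)).map Sigma.fst) = K.val
  rw [Multiset.map_map]
  simp

theorem mem_mkHeap {K : Finset ℕ} {f : ℕ → ℕ} {k : ℕ} : k ∈ mkHeap K f ↔ k ∈ K := by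
  rw [← Finmap.mem_keys, keys_mkHeap]

theorem lookup_mkHeap_of_mem {K : Finset ℕ} {f : ℕ → ℕ} {k : ℕ} (hk : k ∈ K) :
    (mkHeap K f).lookup k = some (f k) := by
  rw [Finmap.lookup_eq_some_iff]
  show (⟨k, f k⟩ : Sigma fun _ : ℕ => ℕ) ∈ K.val.map fun k => ⟨k, f k⟩
  exact Multiset.mem_map_of_mem _ hk

theorem lookup_mkHeap_of_not_mem {K : Finset ℕ} {f : ℕ → ℕ} {k : ℕ} (hk : k ∉ K) :
    (mkHeap K f).lookup k = none :=
  Finmap.lookup_eq_none.mpr (fun h => hk (mem_mkHeap.mp h))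

theorem heap_eq_empty_of_keys {h : Heap} (hk : h.keys = ∅) : h = ∅ := by
  apply Finmap.ext_lookup
  intro x
  rw [Finmap.lookup_empty, Finmap.lookup_eq_none, ← Finmap.mem_keys, hk]
  simp

/-! ### Structural lemmas about atoms -/

theorem ptos_sublist : ∀ F : Spatial, (F.ptos.map fun p => (p.1, p.1)).Sublist F.absArrays
  | .emp => List.Sublist.refl _
  | .pto _ _ => List.Sublist.refl _
  | .arr _ _ => List.nil_sublist _
  | .star F G => by
      simpa only [Spatial.ptos, Spatial.absArrays, List.map_append] using
        List.Sublist.append (ptos_sublist F) (ptos_sublist G)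

theorem arrs_sublist : ∀ F : Spatial, F.arrs.Sublist F.absArrays
  | .emp => List.Sublist.refl _
  | .pto _ _ => List.nil_sublist _
  | .arr _ _ => List.Sublist.refl _
  | .star F G => by
      simpa only [Spatial.arrs, Spatial.absArrays] using
        List.Sublist.append (arrs_sublist F) (arrs_sublist G)

theorem mem_absArrays_cases : ∀ F : Spatial, ∀ e ∈ F.absArrays,
    e ∈ F.arrs ∨ ∃ r ∈ F.ptos, e = (r.1, r.1)
  | .emp, e, he => absurd he List.not_mem_nil
  | .pto t u, e, he => by
      right
      simp only [Spatial.absArrays, List.mem_singleton] at he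
      exact ⟨(t, u), List.mem_singleton_self _, he⟩
  | .arr _ _, e, he => Or.inl he
  | .star F G, e, he => by
      simp only [Spatial.absArrays, List.mem_append] at he
      rcases he with he | he
      · rcases mem_absArrays_cases F e he with h | ⟨r, hr, hre⟩
        · exact Or.inl (List.mem_append_left _ h)
        · exact Or.inr ⟨r, List.mem_append_left _ hr, hre⟩
      · rcases mem_absArrays_cases G e he with h | ⟨r, hr, hre⟩
        · exact Or.inl (List.mem_append_right _ h)
        · exact Or.inr ⟨r, List.mem_append_right _ hr, hre⟩

theorem absArrays_vars : ∀ F : Spatial, ∀ p ∈ F.absArrays,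
    p.1.vars ⊆ F.vars ∧ p.2.vars ⊆ F.vars
  | .emp, p, hp => absurd hp List.not_mem_nil
  | .pto t u, p, hp => by
      simp only [Spatial.absArrays, List.mem_singleton] at hp
      subst hp
      exact ⟨Set.subset_union_left, Set.subset_union_left⟩
  | .arr t u, p, hp => by
      simp only [Spatial.absArrays, List.mem_singleton] at hp
      subst hp
      exact ⟨Set.subset_union_left, Set.subset_union_right⟩
  | .star F G, p, hp => by
      simp only [Spatial.absArrays, List.mem_append] at hp
      rcases hp with hp | hp
      · exact ⟨((absArrays_vars F p hp).1).trans Set.subset_union_left,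
          ((absArrays_vars F p hp).2).trans Set.subset_union_left⟩
      · exact ⟨((absArrays_vars G p hp).1).trans Set.subset_union_right,
          ((absArrays_vars G p hp).2).trans Set.subset_union_right⟩

theorem ptos_vars : ∀ F : Spatial, ∀ p ∈ F.ptos,
    p.1.vars ⊆ F.vars ∧ p.2.vars ⊆ F.vars
  | .emp, p, hp => absurd hp List.not_mem_nil
  | .pto t u, p, hp => by
      simp only [Spatial.ptos, List.mem_singleton] at hp
      subst hp
      exact ⟨Set.subset_union_left, Set.subset_union_right⟩
  | .arr _ _, p, hp => absurd hp List.not_mem_nil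
  | .star F G, p, hp => by
      simp only [Spatial.ptos, List.mem_append] at hp
      rcases hp with hp | hp
      · exact ⟨((ptos_vars F p hp).1).trans Set.subset_union_left,
          ((ptos_vars F p hp).2).trans Set.subset_union_left⟩
      · exact ⟨((ptos_vars G p hp).1).trans Set.subset_union_right,
          ((ptos_vars G p hp).2).trans Set.subset_union_right⟩

/-- The disjointness relation on abstract arrays. -/
abbrev arrDisj (s : Stack) (p q : Trm × Trm) : Prop :=
  p.2.eval s < q.1.eval s ∨ q.2.eval s < p.1.eval s

theorem ptos_addr_ne {s : Stack} {F : Spatial}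
    (h : F.absArrays.Pairwise (arrDisj s)) :
    F.ptos.Pairwise (fun p q => p.1.eval s ≠ q.1.eval s) := by
  have := (h.sublist (ptos_sublist F))
  rw [List.pairwise_map] at this
  exact this.imp fun hpq => hpq.elim (fun h' => Nat.ne_of_lt h') (fun h' => (Nat.ne_of_lt h').symm)

theorem arr_pto_sep {s : Stack} : ∀ F : Spatial,
    F.absArrays.Pairwise (arrDisj s) →
    ∀ p ∈ F.arrs, ∀ r ∈ F.ptos,
      p.2.eval s < r.1.eval s ∨ r.1.eval s < p.1.eval s
  | .emp, _, p, hp, _, _ => absurd hp List.not_mem_nil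
  | .pto _ _, _, p, hp, _, _ => absurd hp List.not_mem_nil
  | .arr _ _, _, _, _, r, hr => absurd hr List.not_mem_nil
  | .star F G, h, p, hp, r, hr => by
      simp only [Spatial.absArrays] at h
      obtain ⟨h1, h2, hacross⟩ := List.pairwise_append.mp h
      simp only [Spatial.arrs, List.mem_append] at hp
      simp only [Spatial.ptos, List.mem_append] at hr
      rcases hp with hp | hp <;> rcases hr with hr | hr
      · exact arr_pto_sep F h1 p hp r hr
      · have := hacross p ((arrs_sublist F).subset hp) (r.1, r.1)
          ((ptos_sublist G).subset (List.mem_map_of_mem hr))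
        exact this
      · have := hacross (r.1, r.1) ((ptos_sublist F).subset (List.mem_map_of_mem hr))
          p ((arrs_sublist G).subset hp)
        exact this.symm
      · exact arr_pto_sep G h2 p hp r hr

/-! ### The canonical pto-value function -/

def ptoVal (s : Stack) (v : ℕ) : List (Trm × Trm) → ℕ → ℕ
  | [], _ => v
  | p :: l, k => if p.1.eval s = k then p.2.eval s else ptoVal s v l k

theorem ptoVal_eq_of_mem {s : Stack} {v : ℕ} {l : List (Trm × Trm)} {p : Trm × Trm}
    (hd : l.Pairwise (fun p q => p.1.eval s ≠ q.1.eval s)) (hp : p ∈ l) :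
    ptoVal s v l (p.1.eval s) = p.2.eval s := by
  induction l with
  | nil => exact absurd hp List.not_mem_nil
  | cons q l ih =>
      rcases List.mem_cons.mp hp with rfl | hp'
      · simp [ptoVal]
      · have hne : q.1.eval s ≠ p.1.eval s := (List.pairwise_cons.mp hd).1 p hp'
        simp only [ptoVal, if_neg hne]
        exact ih (List.pairwise_cons.mp hd).2 hp'

theorem ptoVal_eq_default {s : Stack} {v : ℕ} {l : List (Trm × Trm)} {k : ℕ}
    (h : ∀ p ∈ l, p.1.eval s ≠ k) : ptoVal s v l k = v := by
  induction l with
  | nil => rfl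
  | cons q l ih =>
      simp only [ptoVal, if_neg (h q (List.mem_cons_self))]
      exact ih fun p hp => h p (List.mem_cons_of_mem _ hp)

theorem le_foldr_max {l : List ℕ} {a : ℕ} (ha : a ∈ l) : a ≤ l.foldr max 0 := by
  induction l with
  | nil => exact absurd ha List.not_mem_nil
  | cons b l ih =>
      rcases List.mem_cons.mp ha with rfl | ha'
      · exact le_max_left _ _
      · exact le_trans (ih ha') (le_max_right _ _)

/-! ### The key characterization of spatial satisfaction -/

theorem sat_iff_spec (s : Stack) : ∀ (F : Spatial) (h : Heap),
    F.sat s h ↔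
      ((∀ p ∈ F.absArrays, p.1.eval s ≤ p.2.eval s) ∧
        F.absArrays.Pairwise (arrDisj s) ∧
        h.keys = fp s F.absArrays ∧
        (∀ p ∈ F.ptos, h.lookup (p.1.eval s) = some (p.2.eval s)))
  | .emp, h => by
      simp only [Spatial.sat, Spatial.absArrays, Spatial.ptos, fp]
      constructor
      · rintro rfl
        simp
      · rintro ⟨-, -, hk, -⟩
        exact heap_eq_empty_of_keys hk
  | .pto t u, h => by
      simp only [Spatial.sat, Spatial.absArrays, Spatial.ptos, fp]
      constructor
      · rintro ⟨hk, hl⟩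
        refine ⟨by simp, by simp, ?_, by simpa using hl⟩
        rw [hk]
        simp [Finset.Icc_self]
      · rintro ⟨-, -, hk, hl⟩
        refine ⟨?_, by simpa using hl (t, u) (List.mem_singleton_self _)⟩
        rw [hk]
        simp [Finset.Icc_self]
  | .arr t u, h => by
      simp only [Spatial.sat, Spatial.absArrays, Spatial.ptos, fp]
      constructor
      · rintro ⟨hle, hk⟩
        exact ⟨by simpa using hle, by simp, by rw [hk]; simp, by simp⟩
      · rintro ⟨hle, -, hk, -⟩
        exact ⟨by simpa using hle (t, u) (List.mem_singleton_self _), by rw [hk]; simp⟩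
  | .star F G, h => by
      constructor
      · rintro ⟨h₁, h₂, hdis, rfl, hF, hG⟩
        obtain ⟨wd₁, pw₁, hk₁, hl₁⟩ := (sat_iff_spec s F h₁).mp hF
        obtain ⟨wd₂, pw₂, hk₂, hl₂⟩ := (sat_iff_spec s G h₂).mp hG
        have hkdis : ∀ x : ℕ, x ∈ fp s F.absArrays → x ∈ fp s G.absArrays → False := by
          intro x hx1 hx2
          rw [← hk₁, Finmap.mem_keys] at hx1
          rw [← hk₂, Finmap.mem_keys] at hx2
          exact hdis x hx1 hx2
        refine ⟨?_, ?_, ?_, ?_⟩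
        · intro p hp
          simp only [Spatial.absArrays, List.mem_append] at hp
          rcases hp with hp | hp
          · exact wd₁ p hp
          · exact wd₂ p hp
        · show (F.absArrays ++ G.absArrays).Pairwise (arrDisj s)
          rw [List.pairwise_append]
          refine ⟨pw₁, pw₂, ?_⟩
          intro p hp q hq
          by_contra hc
          obtain ⟨x, hx1, hx2, hx3, hx4⟩ :
              ∃ x, p.1.eval s ≤ x ∧ x ≤ p.2.eval s ∧ q.1.eval s ≤ x ∧ x ≤ q.2.eval s := by
            have h1 := wd₁ p hp
            have h2 := wd₂ q hq
            exact ⟨max (p.1.eval s) (q.1.eval s), by omega, by omega, by omega, by omega⟩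
          exact hkdis x (mem_fp.mpr ⟨p, hp, hx1, hx2⟩) (mem_fp.mpr ⟨q, hq, hx3, hx4⟩)
        · show (h₁ ∪ h₂).keys = fp s (F.absArrays ++ G.absArrays)
          rw [Finmap.keys_union, fp_append, hk₁, hk₂]
        · intro p hp
          simp only [Spatial.ptos, List.mem_append] at hp
          rcases hp with hp | hp
          · rw [Finmap.lookup_union_left, hl₁ p hp]
            rw [← Finmap.mem_keys, hk₁]
            exact mem_fp.mpr ⟨(p.1, p.1), (ptos_sublist F).subset (List.mem_map_of_mem hp),
              le_refl _, le_refl _⟩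
          · rw [Finmap.lookup_union_right, hl₂ p hp]
            intro hmem
            have hx1 : p.1.eval s ∈ fp s F.absArrays := by
              rw [← hk₁]; exact Finmap.mem_keys.mpr hmem
            have hx2 : p.1.eval s ∈ fp s G.absArrays := mem_fp.mpr
              ⟨(p.1, p.1), (ptos_sublist G).subset (List.mem_map_of_mem hp),
                le_refl _, le_refl _⟩
            exact hkdis _ hx1 hx2
      · rintro ⟨wd, pw, hk, hl⟩
        simp only [Spatial.absArrays] at wd pw hk
        simp only [Spatial.ptos] at hl
        have wd₁ : ∀ p ∈ F.absArrays, p.1.eval s ≤ p.2.eval s :=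
          fun p hp => wd p (List.mem_append_left _ hp)
        have wd₂ : ∀ p ∈ G.absArrays, p.1.eval s ≤ p.2.eval s :=
          fun p hp => wd p (List.mem_append_right _ hp)
        have pw' : (F.absArrays ++ G.absArrays).Pairwise (arrDisj s) := pw
        rw [List.pairwise_append] at pw'
        obtain ⟨pw₁, pw₂, hacross⟩ := pw'
        have hkdis : ∀ x : ℕ, x ∈ fp s F.absArrays → x ∈ fp s G.absArrays → False := by
          intro x hx1 hx2
          obtain ⟨p, hp, hp1, hp2⟩ := mem_fp.mp hx1
          obtain ⟨q, hq, hq1, hq2⟩ := mem_fp.mp hx2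
          have := hacross p hp q hq
          rcases this with h' | h' <;> omega
        set f : ℕ → ℕ := fun k => (h.lookup k).getD 0 with hf
        set h₁ : Heap := mkHeap (fp s F.absArrays) f with hh₁
        set h₂ : Heap := mkHeap (fp s G.absArrays) f with hh₂
        have hmem1 : ∀ k : ℕ, k ∈ h₁ ↔ k ∈ fp s F.absArrays := fun k => mem_mkHeap
        have hmem2 : ∀ k : ℕ, k ∈ h₂ ↔ k ∈ fp s G.absArrays := fun k => mem_mkHeap
        have hlookup : ∀ k : ℕ, k ∈ h.keys → h.lookup k = some (f k) := by
          intro k hk'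
          obtain ⟨b, hb⟩ := Finmap.mem_iff.mp (Finmap.mem_keys.mp hk')
          rw [hb]
          simp [hf, hb]
        have hdis : h₁.Disjoint h₂ := by
          intro x hx1 hx2
          exact hkdis x ((hmem1 x).mp hx1) ((hmem2 x).mp hx2)
        have hunion : h = h₁ ∪ h₂ := by
          apply Finmap.ext_lookup
          intro x
          by_cases hx1 : x ∈ fp s F.absArrays
          · rw [Finmap.lookup_union_left ((hmem1 x).mpr hx1), hh₁,
              lookup_mkHeap_of_mem hx1]
            apply hlookup
            rw [hk, fp_append]
            exact Finset.mem_union_left _ hx1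
          · by_cases hx2 : x ∈ fp s G.absArrays
            · rw [Finmap.lookup_union_right (fun hc => hx1 ((hmem1 x).mp hc)), hh₂,
                lookup_mkHeap_of_mem hx2]
              apply hlookup
              rw [hk, fp_append]
              exact Finset.mem_union_right _ hx2
            · rw [Finmap.lookup_union_right (fun hc => hx1 ((hmem1 x).mp hc)), hh₂,
                lookup_mkHeap_of_not_mem hx2, Finmap.lookup_eq_none, ← Finmap.mem_keys, hk,
                fp_append]
              simp [hx1, hx2]
        refine ⟨h₁, h₂, hdis, hunion, ?_, ?_⟩
        · rw [sat_iff_spec s F h₁]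
          refine ⟨wd₁, pw₁, by rw [hh₁, keys_mkHeap], ?_⟩
          intro p hp
          have haddr : p.1.eval s ∈ fp s F.absArrays := mem_fp.mpr
            ⟨(p.1, p.1), (ptos_sublist F).subset (List.mem_map_of_mem hp),
              le_refl _, le_refl _⟩
          rw [hh₁, lookup_mkHeap_of_mem haddr]
          have := hl p (List.mem_append_left _ hp)
          simp [hf, this]
        · rw [sat_iff_spec s G h₂]
          refine ⟨wd₂, pw₂, by rw [hh₂, keys_mkHeap], ?_⟩
          intro p hp
          have haddr : p.1.eval s ∈ fp s G.absArrays := mem_fp.mpr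
            ⟨(p.1, p.1), (ptos_sublist G).subset (List.mem_map_of_mem hp),
              le_refl _, le_refl _⟩
          rw [hh₂, lookup_mkHeap_of_mem haddr]
          have := hl p (List.mem_append_right _ hp)
          simp [hf, this]

theorem symsat_iff (s : Stack) (h : Heap) (A : SymHeap) :
    A.sat s h ↔ gammaSat A s ∧ h.keys = fp s A.spatial.absArrays ∧
      (∀ p ∈ A.spatial.ptos, h.lookup (p.1.eval s) = some (p.2.eval s)) := by
  unfold SymHeap.sat gammaSat
  rw [sat_iff_spec]
  tauto


/-- Entailment via Presburger arithmetic: let `A` be quantifier-free and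
`B = ∃z⃗. Q`, with `z⃗` disjoint from the variables of `A` and no right-hand
side variable of a points-to in `Q` among `z⃗`. Then `A ⊨ B` iff the sentence
`∀x⃗. ¬χ(A,B)` is true over ℕ (universally quantifying all free variables,
i.e. over all stacks). -/
theorem stmt_18 (A : SymHeap) (zs : List ℕ) (Q : SymHeap)
    (hzA : ∀ z ∈ zs, z ∉ A.vars)
    (hw : ∀ p ∈ Q.spatial.ptos, ∀ z ∈ zs, z ∉ Trm.vars p.2) :
    (∀ (s : Stack) (h : Heap), A.sat s h → QSymHeap.sat s h ⟨zs, Q⟩) ↔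
    (∀ s : Stack, ¬ chiSat A zs Q s) := by
  have hevA : ∀ (s s' : Stack), (∀ x ∉ zs, s' x = s x) →
      ∀ t : Trm, t.vars ⊆ A.vars → t.eval s' = t.eval s := by
    intro s s' hag t ht
    exact Trm.eval_congr t fun x hx => hag x fun hxz => hzA x hxz (ht hx)
  have habsA : ∀ (s s' : Stack), (∀ x ∉ zs, s' x = s x) →
      ∀ p ∈ A.spatial.absArrays, p.1.eval s' = p.1.eval s ∧ p.2.eval s' = p.2.eval s := by
    intro s s' hag p hp
    have hv := absArrays_vars A.spatial p hp
    exact ⟨hevA s s' hag p.1 (hv.1.trans Set.subset_union_right),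
      hevA s s' hag p.2 (hv.2.trans Set.subset_union_right)⟩
  have hptA : ∀ (s s' : Stack), (∀ x ∉ zs, s' x = s x) →
      ∀ p ∈ A.spatial.ptos, p.1.eval s' = p.1.eval s ∧ p.2.eval s' = p.2.eval s := by
    intro s s' hag p hp
    have hv := ptos_vars A.spatial p hp
    exact ⟨hevA s s' hag p.1 (hv.1.trans Set.subset_union_right),
      hevA s s' hag p.2 (hv.2.trans Set.subset_union_right)⟩
  constructor
  · -- entailment implies the sentence
    intro hEnt s hχ
    obtain ⟨hγA, hall⟩ := hχ
    obtain ⟨hpureA, hwdA, hpwA⟩ := hγA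
    set V : ℕ := (Q.spatial.ptos.map fun p => p.2.eval s).foldr max 0 + 1 with hV
    set h : Heap := mkHeap (fp s A.spatial.absArrays) (ptoVal s V A.spatial.ptos) with hh
    have hAsat : A.sat s h := by
      rw [symsat_iff]
      refine ⟨⟨hpureA, hwdA, hpwA⟩, by rw [hh, keys_mkHeap], ?_⟩
      intro p hp
      have haddr : p.1.eval s ∈ fp s A.spatial.absArrays := mem_fp.mpr
        ⟨(p.1, p.1), (ptos_sublist A.spatial).subset (List.mem_map_of_mem hp),
          le_refl _, le_refl _⟩
      rw [hh, lookup_mkHeap_of_mem haddr, ptoVal_eq_of_mem (ptos_addr_ne hpwA) hp]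
    obtain ⟨s', hag, hQsat⟩ := hEnt s h hAsat
    obtain ⟨hγQ, hkQ, hlQ⟩ := (symsat_iff s' h Q).mp hQsat
    have hfpA : fp s' A.spatial.absArrays = fp s A.spatial.absArrays :=
      fp_congr (habsA s s' hag)
    have hkeys : fp s A.spatial.absArrays = fp s' Q.spatial.absArrays := by
      rw [← hkQ, hh, keys_mkHeap]
    rcases hall s' hag with hng | hφ | hφ' | hψ1 | hψ2
    · exact hng hγQ
    · obtain ⟨x, ⟨p, hp, hx1, hx2⟩, hout⟩ := hφ
      have hx : x ∈ fp s' Q.spatial.absArrays := by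
        rw [← hkeys, ← hfpA]
        exact mem_fp.mpr ⟨p, hp, hx1, hx2⟩
      obtain ⟨q, hq, hq1, hq2⟩ := mem_fp.mp hx
      rcases hout q hq with h' | h' <;> omega
    · obtain ⟨x, ⟨q, hq, hx1, hx2⟩, hout⟩ := hφ'
      have hx : x ∈ fp s' A.spatial.absArrays := by
        rw [hfpA, hkeys]
        exact mem_fp.mpr ⟨q, hq, hx1, hx2⟩
      obtain ⟨p, hp, hp1, hp2⟩ := mem_fp.mp hx
      rcases hout p hp with h' | h' <;> omega
    · obtain ⟨p, hp, q, hq, h1, h2⟩ := hψ1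
      have hpe := habsA s s' hag p ((arrs_sublist A.spatial).subset hp)
      set k : ℕ := q.1.eval s' with hk
      have hkmem : k ∈ fp s A.spatial.absArrays :=
        mem_fp.mpr ⟨p, (arrs_sublist A.spatial).subset hp, by omega, by omega⟩
      have hlk : h.lookup k = some (ptoVal s V A.spatial.ptos k) := by
        rw [hh]; exact lookup_mkHeap_of_mem hkmem
      have hlk' := hlQ q hq
      rw [← hk, hlk] at hlk'
      have hval : ptoVal s V A.spatial.ptos k = V := by
        apply ptoVal_eq_default
        intro r hr hrk
        have := arr_pto_sep A.spatial hpwA p hp r hr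
        omega
      have hq2 : q.2.eval s' = q.2.eval s :=
        Trm.eval_congr q.2 fun x hx => hag x fun hxz => hw q hq x hxz hx
      have hVle : q.2.eval s ≤ (Q.spatial.ptos.map fun p => p.2.eval s).foldr max 0 :=
        le_foldr_max (List.mem_map_of_mem hq)
      rw [hval, hq2] at hlk'
      have : V = q.2.eval s := by injection hlk'
      omega
    · obtain ⟨p, hp, q, hq, heq, hne⟩ := hψ2
      obtain ⟨hp1, hp2⟩ := hptA s s' hag p hp
      have hlp := ((symsat_iff s h A).mp hAsat).2.2 p hp
      have hlq := hlQ q hq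
      rw [← heq, hp1, hlp] at hlq
      have : p.2.eval s = q.2.eval s' := by injection hlq
      rw [← hp2] at this
      exact hne this
  · -- the sentence implies entailment
    intro H s h hAsat
    obtain ⟨hγA, hkeys, hlA⟩ := (symsat_iff s h A).mp hAsat
    have h2 : ¬ ∀ s' : Stack, (∀ x : ℕ, x ∉ zs → s' x = s x) →
        (¬ gammaSat Q s' ∨ phiSat A Q s' ∨ phiSat Q A s' ∨
          psi1Sat A Q s' ∨ psi2Sat A Q s') := fun hc => H s ⟨hγA, hc⟩
    push_neg at h2
    obtain ⟨s', hag, hγQ, hnφ1, hnφ2, hnψ1, hnψ2⟩ := h2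
    have hfpA : fp s' A.spatial.absArrays = fp s A.spatial.absArrays :=
      fp_congr (habsA s s' hag)
    have hfpEq : fp s' A.spatial.absArrays = fp s' Q.spatial.absArrays := by
      apply Finset.ext
      intro x
      rw [mem_fp, mem_fp]
      constructor
      · rintro ⟨p, hp, hx1, hx2⟩
        by_contra hc
        push_neg at hc
        apply hnφ1
        refine ⟨x, ⟨p, hp, hx1, hx2⟩, ?_⟩
        intro q hq
        have := hc q hq
        omega
      · rintro ⟨q, hq, hx1, hx2⟩
        by_contra hc
        push_neg at hc
        apply hnφ2
        refine ⟨x, ⟨q, hq, hx1, hx2⟩, ?_⟩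
        intro p hp
        have := hc p hp
        omega
    refine ⟨s', hag, (symsat_iff s' h Q).mpr ⟨hγQ, ?_, ?_⟩⟩
    · rw [hkeys, ← hfpA, hfpEq]
    · intro q hq
      set k : ℕ := q.1.eval s' with hk
      have hkmem : k ∈ fp s' A.spatial.absArrays := by
        rw [hfpEq]
        exact mem_fp.mpr ⟨(q.1, q.1), (ptos_sublist Q.spatial).subset
          (List.mem_map_of_mem hq), le_refl _, le_refl _⟩
      obtain ⟨e, he, he1, he2⟩ := mem_fp.mp hkmem
      rcases mem_absArrays_cases A.spatial e he with harr | ⟨r, hr, rfl⟩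
      · exact absurd ⟨e, harr, q, hq, he1, he2⟩ hnψ1
      · have he1' : r.1.eval s' ≤ k := he1
        have he2' : k ≤ r.1.eval s' := he2
        have hrk : r.1.eval s' = k := le_antisymm he1' he2'
        have hval : r.2.eval s' = q.2.eval s' := by
          by_contra hne
          exact hnψ2 ⟨r, hr, q, hq, by rw [hrk], hne⟩
        obtain ⟨hr1, hr2⟩ := hptA s s' hag r hr
        have := hlA r hr
        rw [← hr1, hrk] at this
        rw [this, ← hr2, hval]
end

section
/- Let G = (V, E) be an undirected graph with vertices v_1, …, v_n of which v_1, …, v_k are the leaves, and let A_G and B_G be the ↦-free symbolic heaps constructed from G for the entailment reduction. Then A_G ⊨ B_G if and only if every 3-colouring of the leaves of G extends to a proper 3-colouring of the whole graph G (i.e., an assignment of colours in {1,2,3} to all vertices such that no two adjacent vertices share a colour). -/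
/-! ### The 2-round 3-colourability reduction for entailment.
The graph `G` has vertices `v_1, …, v_n` (indexed by `Fin n`), of which the
first `kk` are the leaves, and edges `E : Fin m → Fin n × Fin n`.
Variables: `c_{i,1}` is `var i` (for `i < n`) and `c̃_{ij}` for the `j`-th edge
is `var (n + j)`. The per-edge base addresses `e_{ij}` are natural-number
constants chosen so that the blocks `[e_{ij}+1, e_{ij}+3]` are pairwise
disjoint. -/

/-- The pure constraint `1 ≤ t ≤ 3`. -/
def oneLeLe3 (t : Trm) : PureF :=
  PureF.and (PureF.le (Trm.const 1) t) (PureF.le t (Trm.const 3))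

/-- `A_G = ⋀_{i=1}^{kk} (1 ≤ c_{i,1} ≤ 3) : ⊛_{(v_i,v_j)∈E} array(e_{ij}+1, e_{ij}+3)`. -/
def heapAGent (kk m : ℕ) (e : Fin m → ℕ) : SymHeap :=
  ⟨bigAnd (List.ofFn fun i : Fin kk => oneLeLe3 (Trm.var i.1)),
   bigStar (List.ofFn fun j : Fin m =>
      Spatial.arr (Trm.const (e j + 1)) (Trm.const (e j + 3)))⟩

/-- The quantifier-free body of `B_G`:
`⋀_{i=1}^{n} (1 ≤ c_{i,1} ≤ 3) ∧ ⋀_{(v_i,v_j)∈E} (1 ≤ c̃_{ij} ≤ 3) :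
 ⊛_{(v_i,v_j)∈E} array(e_{ij}+c_{i,1}, e_{ij}+c_{i,1}) *
   array(e_{ij}+c_{j,1}, e_{ij}+c_{j,1}) * array(e_{ij}+c̃_{ij}, e_{ij}+c̃_{ij})`. -/
def heapBGentBody (n m : ℕ) (E : Fin m → Fin n × Fin n) (e : Fin m → ℕ) : SymHeap :=
  ⟨PureF.and
     (bigAnd (List.ofFn fun i : Fin n => oneLeLe3 (Trm.var i.1)))
     (bigAnd (List.ofFn fun j : Fin m => oneLeLe3 (Trm.var (n + j.1)))),
   bigStar (List.ofFn fun j : Fin m =>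
     Spatial.star
       (Spatial.arr (Trm.add (Trm.const (e j)) (Trm.var ((E j).1 : ℕ)))
                    (Trm.add (Trm.const (e j)) (Trm.var ((E j).1 : ℕ))))
       (Spatial.star
         (Spatial.arr (Trm.add (Trm.const (e j)) (Trm.var ((E j).2 : ℕ)))
                      (Trm.add (Trm.const (e j)) (Trm.var ((E j).2 : ℕ))))
         (Spatial.arr (Trm.add (Trm.const (e j)) (Trm.var (n + j.1)))
                      (Trm.add (Trm.const (e j)) (Trm.var (n + j.1))))))⟩

/-- The existentially quantified variables `z⃗` of `B_G`: all variables of `B_G`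
not occurring in `A_G`, i.e. `c_{i,1}` for `i ≥ kk` and all `c̃_{ij}`. -/
def entBound (n kk m : ℕ) : List ℕ :=
  (List.range n).drop kk ++ (List.range m).map (fun j => n + j)

/-- Every 3-colouring of the leaves (the first `kk` vertices) extends to a
proper 3-colouring of the whole graph. -/
def LeafColouringsExtend (n kk m : ℕ) (hkn : kk ≤ n)
    (E : Fin m → Fin n × Fin n) : Prop :=
  ∀ cl : Fin kk → Fin 3, ∃ col : Fin n → Fin 3,
    (∀ i : Fin kk, col (Fin.castLE hkn i) = cl i) ∧
    ∀ j : Fin m, col (E j).1 ≠ col (E j).2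

/-! ### Auxiliary lemmas for the proof -/

lemma bigAnd_sat {s : Stack} {ps : List PureF} : (bigAnd ps).sat s ↔ ∀ p ∈ ps, p.sat s := by
  induction ps with
  | nil => simp [bigAnd, PureF.sat]
  | cons p ps ih => simp [bigAnd, PureF.sat, ih]

lemma oneLeLe3_sat {s : Stack} {t : Trm} :
    (oneLeLe3 t).sat s ↔ 1 ≤ t.eval s ∧ t.eval s ≤ 3 := by
  simp [oneLeLe3, PureF.sat, Trm.eval]

lemma mem_foldr_union {x : ℕ} : ∀ {hs : List Heap},
    x ∈ hs.foldr (· ∪ ·) ∅ ↔ ∃ g ∈ hs, x ∈ g := by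
  intro hs
  induction hs with
  | nil => simp [List.foldr]; exact Finmap.notMem_empty
  | cons g hs ih => simp [List.foldr, Finmap.mem_union, ih]

lemma disjoint_foldr {g : Heap} {hs : List Heap} (H : ∀ g' ∈ hs, g.Disjoint g') :
    g.Disjoint (hs.foldr (· ∪ ·) ∅) := by
  intro x hx hx'
  obtain ⟨g', hg', hxg'⟩ := mem_foldr_union.1 hx'
  exact H g' hg' x hx hxg'

lemma bigStar_ofFn_sat {s : Stack} : ∀ {m : ℕ} (f : Fin m → Spatial) (hs : Fin m → Heap),
    (∀ j₁ j₂, j₁ ≠ j₂ → (hs j₁).Disjoint (hs j₂)) → (∀ j, (f j).sat s (hs j)) →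
    (bigStar (List.ofFn f)).sat s ((List.ofFn hs).foldr (· ∪ ·) ∅)
  | 0, f, hs, _, _ => by simp [bigStar, Spatial.sat]
  | (m + 1), f, hs, hdis, hsat => by
    rw [List.ofFn_succ, List.ofFn_succ]
    refine ⟨hs 0, (List.ofFn fun i : Fin m => hs i.succ).foldr (· ∪ ·) ∅, ?_, rfl, hsat 0, ?_⟩
    · refine disjoint_foldr ?_
      intro g' hg'
      obtain ⟨i, rfl⟩ := List.mem_ofFn.1 hg'
      exact hdis 0 i.succ (by simp [Fin.ext_iff])
    · exact bigStar_ofFn_sat (fun i => f i.succ) (fun i => hs i.succ)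
        (fun i j hij => hdis i.succ j.succ (by simpa [Fin.ext_iff] using hij))
        (fun i => hsat i.succ)

lemma bigStar_ofFn_mono {s s' : Stack} : ∀ {m : ℕ} (f g : Fin m → Spatial),
    (∀ j h', (f j).sat s h' → (g j).sat s' h') →
    ∀ h, (bigStar (List.ofFn f)).sat s h → (bigStar (List.ofFn g)).sat s' h
  | 0, f, g, _, h => by simp [bigStar, Spatial.sat]
  | (m + 1), f, g, H, h => by
    rw [List.ofFn_succ, List.ofFn_succ]
    rintro ⟨h₁, h₂, hd, rfl, h1sat, h2sat⟩
    exact ⟨h₁, h₂, hd, rfl, H 0 h₁ h1sat,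
      bigStar_ofFn_mono (fun i => f i.succ) (fun i => g i.succ)
        (fun i => H i.succ) h₂ h2sat⟩

lemma bigStar_sat_mem {s : Stack} : ∀ {Fs : List Spatial} {h : Heap},
    (bigStar Fs).sat s h → ∀ F ∈ Fs, ∃ h', F.sat s h' := by
  intro Fs
  induction Fs with
  | nil => simp
  | cons F Fs ih =>
    rintro h ⟨h₁, h₂, _, rfl, h1sat, h2sat⟩ G hG
    rcases List.mem_cons.1 hG with rfl | hG
    · exact ⟨h₁, h1sat⟩
    · exact ih h2sat G hG

lemma mem_entBound {n kk m x : ℕ} :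
    x ∈ entBound n kk m ↔ (kk ≤ x ∧ x < n) ∨ (n ≤ x ∧ x < n + m) := by
  have hdrop : x ∈ (List.range n).drop kk ↔ kk ≤ x ∧ x < n := by
    constructor
    · intro hx
      obtain ⟨i, hi, hg⟩ := List.mem_iff_getElem.1 hx
      rw [List.getElem_drop, List.getElem_range] at hg
      rw [List.length_drop, List.length_range] at hi
      omega
    · rintro ⟨h1, h2⟩
      refine List.mem_iff_getElem.2 ⟨x - kk, ?_, ?_⟩
      · rw [List.length_drop, List.length_range]; omega
      · rw [List.getElem_drop, List.getElem_range]; omega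
  simp only [entBound, List.mem_append, hdrop, List.mem_map, List.mem_range]
  constructor
  · rintro (h | ⟨j, hj, rfl⟩)
    · exact Or.inl h
    · exact Or.inr ⟨by omega, by omega⟩
  · rintro (h | h)
    · exact Or.inl h
    · exact Or.inr ⟨x - n, by omega, by omega⟩

/-- Split a heap whose keys are a 3-element interval into three singletons. -/
lemma triple_split (hj : Heap) (b c1 c2 c3 : ℕ)
    (hk : hj.keys = Finset.Icc (b + 1) (b + 3))
    (hb1 : 1 ≤ c1) (hb1' : c1 ≤ 3) (hb2 : 1 ≤ c2) (hb2' : c2 ≤ 3)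
    (hb3 : 1 ≤ c3) (hb3' : c3 ≤ 3)
    (d12 : c1 ≠ c2) (d13 : c1 ≠ c3) (d23 : c2 ≠ c3) :
    ∃ g1 g2 g3 : Heap, g1.Disjoint (g2 ∪ g3) ∧ g2.Disjoint g3 ∧
      hj = g1 ∪ (g2 ∪ g3) ∧
      g1.keys = {b + c1} ∧ g2.keys = {b + c2} ∧ g3.keys = {b + c3} := by
  have hmem : ∀ c, 1 ≤ c → c ≤ 3 → b + c ∈ hj := by
    intro c h1 h2
    rw [← Finmap.mem_keys, hk, Finset.mem_Icc]
    omega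
  obtain ⟨v1, hv1⟩ := Finmap.mem_iff.1 (hmem c1 hb1 hb1')
  obtain ⟨v2, hv2⟩ := Finmap.mem_iff.1 (hmem c2 hb2 hb2')
  obtain ⟨v3, hv3⟩ := Finmap.mem_iff.1 (hmem c3 hb3 hb3')
  have hne12 : b + c1 ≠ b + c2 := by omega
  have hne13 : b + c1 ≠ b + c3 := by omega
  have hne23 : b + c2 ≠ b + c3 := by omega
  refine ⟨Finmap.singleton (b + c1) v1, Finmap.singleton (b + c2) v2,
      Finmap.singleton (b + c3) v3, ?_, ?_, ?_, Finmap.keys_singleton _ _,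
      Finmap.keys_singleton _ _, Finmap.keys_singleton _ _⟩
  · intro x hx hx'
    rw [Finmap.mem_singleton] at hx
    rcases Finmap.mem_union.1 hx' with h | h <;> rw [Finmap.mem_singleton] at h <;> omega
  · intro x hx hx'
    rw [Finmap.mem_singleton] at hx hx'
    omega
  · apply Finmap.ext_lookup
    intro x
    by_cases h1 : x = b + c1
    · subst h1
      rw [Finmap.lookup_union_left (by rw [Finmap.mem_singleton]),
        Finmap.lookup_singleton_eq, hv1]
    by_cases h2 : x = b + c2
    · subst h2
      rw [Finmap.lookup_union_right (by rw [Finmap.mem_singleton]; exact h1),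
        Finmap.lookup_union_left (by rw [Finmap.mem_singleton]),
        Finmap.lookup_singleton_eq, hv2]
    by_cases h3 : x = b + c3
    · subst h3
      rw [Finmap.lookup_union_right (by rw [Finmap.mem_singleton]; exact h1),
        Finmap.lookup_union_right (by rw [Finmap.mem_singleton]; exact h2),
        Finmap.lookup_singleton_eq, hv3]
    · have hx : x ∉ hj := by
        rw [← Finmap.mem_keys, hk, Finset.mem_Icc]
        omega
      rw [Finmap.lookup_eq_none.2 hx, Finmap.lookup_eq_none.2 ?_]
      intro hx'
      rcases Finmap.mem_union.1 hx' with h | h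
      · exact h1 (Finmap.mem_singleton _ _ _ |>.1 h)
      rcases Finmap.mem_union.1 h with h | h
      · exact h2 (Finmap.mem_singleton _ _ _ |>.1 h)
      · exact h3 (Finmap.mem_singleton _ _ _ |>.1 h)
/-- The stack used to witness the existential in `B_G`: vertex variables get
`colour + 1`, edge variables get the third colour, everything else is as in `s`. -/
def extStack (n m : ℕ) (E : Fin m → Fin n × Fin n) (col : Fin n → Fin 3) (s : Stack) : Stack :=
  fun x =>
    if hx : x < n then ((col ⟨x, hx⟩ : ℕ)) + 1
    else if hx2 : x - n < m then
      6 - ((col (E ⟨x - n, hx2⟩).1 : ℕ) + 1) - ((col (E ⟨x - n, hx2⟩).2 : ℕ) + 1)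
    else s x

lemma extStack_lt {n m : ℕ} {E : Fin m → Fin n × Fin n} {col : Fin n → Fin 3} {s : Stack}
    (i : Fin n) : extStack n m E col s i.1 = (col i : ℕ) + 1 := by
  simp [extStack, i.isLt]

lemma extStack_edge {n m : ℕ} {E : Fin m → Fin n × Fin n} {col : Fin n → Fin 3} {s : Stack}
    (j : Fin m) : extStack n m E col s (n + j.1) =
      6 - ((col (E j).1 : ℕ) + 1) - ((col (E j).2 : ℕ) + 1) := by
  have h1 : ¬ n + j.1 < n := by omega
  have h2 : n + j.1 - n < m := by omega
  have h3 : (⟨n + j.1 - n, h2⟩ : Fin m) = j := by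
    ext; simp
  rw [extStack, dif_neg h1, dif_pos h2, h3]

lemma extStack_ge {n m : ℕ} {E : Fin m → Fin n × Fin n} {col : Fin n → Fin 3} {s : Stack}
    (x : ℕ) (hx : ¬ x < n) (hx2 : ¬ x - n < m) : extStack n m E col s x = s x := by
  rw [extStack, dif_neg hx, dif_neg hx2]

/-- Lemma (colourability/entailment): `A_G ⊨ B_G` iff every 3-colouring of the
leaves of `G` extends to a proper 3-colouring of the whole graph `G`. -/
theorem stmt_19 (n kk m : ℕ) (hkn : kk ≤ n)
    (E : Fin m → Fin n × Fin n) (hirr : ∀ j : Fin m, (E j).1 ≠ (E j).2)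
    (e : Fin m → ℕ)
    (hblocks : ∀ j₁ j₂ : Fin m, j₁ ≠ j₂ →
      Disjoint (Finset.Icc (e j₁ + 1) (e j₁ + 3)) (Finset.Icc (e j₂ + 1) (e j₂ + 3))) :
    (∀ (s : Stack) (h : Heap), (heapAGent kk m e).sat s h →
        QSymHeap.sat s h ⟨entBound n kk m, heapBGentBody n m E e⟩) ↔
    LeafColouringsExtend n kk m hkn E := by
  constructor
  · -- entailment implies colouring extension
    intro hEnt cl
    classical
    set s : Stack := fun x => if hx : x < kk then ((cl ⟨x, hx⟩ : ℕ)) + 1 else 1 with hs_def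
    set hs : Fin m → Heap := fun j =>
      Finmap.singleton (e j + 1) 0 ∪
        (Finmap.singleton (e j + 2) 0 ∪ Finmap.singleton (e j + 3) 0) with hhs_def
    have hkeys : ∀ j, (hs j).keys = Finset.Icc (e j + 1) (e j + 3) := by
      intro j
      ext x
      simp only [hhs_def, Finmap.keys_union, Finmap.keys_singleton, Finset.mem_union,
        Finset.mem_singleton, Finset.mem_Icc]
      omega
    have hdis : ∀ j₁ j₂, j₁ ≠ j₂ → (hs j₁).Disjoint (hs j₂) := by
      intro j₁ j₂ hne x hx hx'
      rw [← Finmap.mem_keys, hkeys] at hx hx'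
      exact Finset.disjoint_left.1 (hblocks j₁ j₂ hne) hx hx'
    have hAsat : (heapAGent kk m e).sat s ((List.ofFn hs).foldr (· ∪ ·) ∅) := by
      refine ⟨?_, ?_⟩
      · apply bigAnd_sat.2
        intro p hp
        obtain ⟨i, rfl⟩ := List.mem_ofFn.1 hp
        rw [oneLeLe3_sat]
        show 1 ≤ s i.1 ∧ s i.1 ≤ 3
        have hsi : s i.1 = (cl i : ℕ) + 1 := by
          rw [hs_def]
          simp [i.isLt]
        have := (cl i).isLt
        omega
      · exact bigStar_ofFn_sat _ hs hdis
          (fun j => ⟨by simp only [Trm.eval]; omega, hkeys j⟩)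
    obtain ⟨s', hagree, hpure, hsp⟩ := hEnt s _ hAsat
    obtain ⟨hP1, hP2⟩ := hpure
    have hvert : ∀ i : Fin n, 1 ≤ s' i.1 ∧ s' i.1 ≤ 3 := by
      intro i
      have := bigAnd_sat.1 hP1 _ (List.mem_ofFn.2 ⟨i, rfl⟩)
      rw [oneLeLe3_sat] at this
      exact this
    refine ⟨fun i => ⟨s' i.1 - 1, by have := hvert i; omega⟩, ?_, ?_⟩
    · intro i
      have hnb : (i : ℕ) ∉ entBound n kk m := by
        rw [mem_entBound]
        have := i.isLt
        omega
      have hag := hagree i.1 hnb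
      have hsi : s i.1 = (cl i : ℕ) + 1 := by
        rw [hs_def]
        simp [i.isLt]
      apply Fin.ext
      show s' (Fin.castLE hkn i).1 - 1 = (cl i : ℕ)
      have : (Fin.castLE hkn i).1 = i.1 := rfl
      rw [this, hag, hsi]
      omega
    · intro j hcol
      obtain ⟨hj, hjsat⟩ :=
        bigStar_sat_mem hsp _ (List.mem_ofFn.2 ⟨j, rfl⟩)
      obtain ⟨g1, g23, d1, heq, hX, g2, g3, d23, heq2, hY, hZ⟩ := hjsat
      have hX2 : g1.keys =
          Finset.Icc (e j + s' ((E j).1 : ℕ)) (e j + s' ((E j).1 : ℕ)) := by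
        simpa only [Trm.eval] using hX.2
      have hY2 : g2.keys =
          Finset.Icc (e j + s' ((E j).2 : ℕ)) (e j + s' ((E j).2 : ℕ)) := by
        simpa only [Trm.eval] using hY.2
      have ha1 : (e j + s' ((E j).1 : ℕ)) ∈ g1 := by
        rw [← Finmap.mem_keys, hX2]
        simp
      have hEq : e j + s' ((E j).1 : ℕ) = e j + s' ((E j).2 : ℕ) := by
        have h1 := hvert (E j).1
        have h2 := hvert (E j).2
        have := congrArg Fin.val hcol
        simp only at this
        omega
      apply d1 _ ha1
      rw [heq2]
      apply Finmap.mem_union.2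
      left
      rw [← Finmap.mem_keys, hY2, hEq]
      simp
  · -- colouring extension implies entailment
    intro hExt s h hA
    obtain ⟨hpureA, hspA⟩ := hA
    have hleaf : ∀ i : Fin kk, 1 ≤ s i.1 ∧ s i.1 ≤ 3 := by
      intro i
      have := bigAnd_sat.1 hpureA _ (List.mem_ofFn.2 ⟨i, rfl⟩)
      rw [oneLeLe3_sat] at this
      exact this
    obtain ⟨col, hext, hprop⟩ :=
      hExt (fun i => ⟨s i.1 - 1, by have := hleaf i; omega⟩)
    refine ⟨extStack n m E col s, ?_, ⟨?_, ?_⟩, ?_⟩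
    · -- agreement off the bound variables
      intro x hx
      rw [mem_entBound] at hx
      push_neg at hx
      by_cases hxn : x < n
      · have hxkk : x < kk := by
          by_contra hc
          have := hx.1 (by omega)
          omega
        have h1 := extStack_lt (E := E) (col := col) (s := s) ⟨x, hxn⟩
        have h2 : Fin.castLE hkn ⟨x, hxkk⟩ = (⟨x, hxn⟩ : Fin n) := rfl
        have h3 := hext ⟨x, hxkk⟩
        rw [h2] at h3
        have h4 := congrArg Fin.val h3
        simp only at h4
        have := hleaf ⟨x, hxkk⟩
        simp only at this h1
        rw [h1, h4]
        omega
      · have hx2 : ¬ x - n < m := by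
          intro hc
          have := hx.2 (by omega)
          omega
        exact extStack_ge x hxn hx2
    · -- vertex colour bounds
      apply bigAnd_sat.2
      intro p hp
      obtain ⟨i, rfl⟩ := List.mem_ofFn.1 hp
      rw [oneLeLe3_sat]
      show 1 ≤ extStack n m E col s i.1 ∧ extStack n m E col s i.1 ≤ 3
      rw [extStack_lt]
      have := (col i).isLt
      omega
    · -- edge colour bounds
      apply bigAnd_sat.2
      intro p hp
      obtain ⟨j, rfl⟩ := List.mem_ofFn.1 hp
      rw [oneLeLe3_sat]
      show 1 ≤ extStack n m E col s (n + j.1) ∧ extStack n m E col s (n + j.1) ≤ 3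
      rw [extStack_edge]
      have h1 := (col (E j).1).isLt
      have h2 := (col (E j).2).isLt
      have h3 : (col (E j).1 : ℕ) ≠ (col (E j).2 : ℕ) :=
        fun hv => hprop j (Fin.ext hv)
      omega
    · -- spatial part
      apply bigStar_ofFn_mono
        (f := fun j : Fin m =>
          Spatial.arr (Trm.const (e j + 1)) (Trm.const (e j + 3)))
        (g := fun j : Fin m =>
          Spatial.star
            (Spatial.arr (Trm.add (Trm.const (e j)) (Trm.var ((E j).1 : ℕ)))
                         (Trm.add (Trm.const (e j)) (Trm.var ((E j).1 : ℕ))))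
            (Spatial.star
              (Spatial.arr (Trm.add (Trm.const (e j)) (Trm.var ((E j).2 : ℕ)))
                           (Trm.add (Trm.const (e j)) (Trm.var ((E j).2 : ℕ))))
              (Spatial.arr (Trm.add (Trm.const (e j)) (Trm.var (n + j.1)))
                           (Trm.add (Trm.const (e j)) (Trm.var (n + j.1))))))
        ?_ h hspA
      intro j hj hsat
      have hk : hj.keys = Finset.Icc (e j + 1) (e j + 3) := hsat.2
      set s' := extStack n m E col s with hs'_def
      have hc1 : s' ((E j).1 : ℕ) = (col (E j).1 : ℕ) + 1 := extStack_lt (E j).1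
      have hc2 : s' ((E j).2 : ℕ) = (col (E j).2 : ℕ) + 1 := extStack_lt (E j).2
      have hc3 : s' (n + j.1) =
          6 - ((col (E j).1 : ℕ) + 1) - ((col (E j).2 : ℕ) + 1) := extStack_edge j
      have hlt1 := (col (E j).1).isLt
      have hlt2 := (col (E j).2).isLt
      have hne : (col (E j).1 : ℕ) ≠ (col (E j).2 : ℕ) :=
        fun hv => hprop j (Fin.ext hv)
      obtain ⟨g1, g2, g3, d1, d23, heq, k1, k2, k3⟩ :=
        triple_split hj (e j) (s' ((E j).1 : ℕ)) (s' ((E j).2 : ℕ)) (s' (n + j.1)) hk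
          (by omega) (by omega) (by omega) (by omega) (by omega) (by omega)
          (by omega) (by omega) (by omega)
      refine ⟨g1, g2 ∪ g3, d1, heq, ⟨le_refl _, ?_⟩, g2, g3, d23, rfl,
        ⟨le_refl _, ?_⟩, ⟨le_refl _, ?_⟩⟩
      · show g1.keys = Finset.Icc (e j + s' ((E j).1 : ℕ)) (e j + s' ((E j).1 : ℕ))
        rw [k1, Finset.Icc_self]
      · show g2.keys = Finset.Icc (e j + s' ((E j).2 : ℕ)) (e j + s' ((E j).2 : ℕ))
        rw [k2, Finset.Icc_self]
      · show g3.keys = Finset.Icc (e j + s' (n + j.1)) (e j + s' (n + j.1))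
        rw [k3, Finset.Icc_self]
end
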